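/- Let G be a linearly ordered abelian group, |z| = max(z, -z), and D ⊆ G a finite nonempty subset. If f : D → D satisfies |f(x) - f(y)| ≤ |x - y| for all x, y in D, then f∘f has a fixed point, i.e., there exists x ∈ D with f(f(x)) = x. -/

import Mathlib

/-- A weakly contractive self-map `f` of a finite nonempty subset of a linearly
ordered abelian group has a fixed point for `f ∘ f`. -/
theorem stmt_12 {G : Type*} [AddCommGroup G] [LinearOrder G] [IsOrderedAddMonoid G] (D : Finset G)
    (hD : D.Nonempty) (f : G → G) (hfD : ∀ x ∈ D, f x ∈ D)
    (hcontr : ∀ x ∈ D, ∀ y ∈ D, max (f x - f y) (-(f x - f y)) ≤ max (x - y) (-(x - y))) :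
    ∃ x ∈ D, f (f x) = x := by
  classical
  have hcontr' : ∀ x ∈ D, ∀ y ∈ D, |f x - f y| ≤ |x - y| := by
    intro x hx y hy
    simpa [abs_eq_max_neg] using hcontr x hx y hy
  obtain ⟨x₀, hx₀D, hmin⟩ := D.exists_min_image (fun x => |f x - x|) hD
  set d := |f x₀ - x₀| with hd
  have hd0 : 0 ≤ d := abs_nonneg _
  rcases le_or_gt x₀ (f x₀) with hcase | hcase
  · -- positive case: f x₀ - x₀ = d
    have hx₀d : f x₀ - x₀ = d := by rw [hd, abs_of_nonneg (sub_nonneg.mpr hcase)]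
    set S := D.filter (fun x => f x - x = d) with hS
    have hSne : S.Nonempty := ⟨x₀, Finset.mem_filter.mpr ⟨hx₀D, hx₀d⟩⟩
    set x₁ := S.max' hSne with hx₁def
    have hx₁S : x₁ ∈ S := S.max'_mem hSne
    have hx₁D : x₁ ∈ D := (Finset.mem_filter.mp hx₁S).1
    have hx₁ : f x₁ - x₁ = d := (Finset.mem_filter.mp hx₁S).2
    have hfx₁D : f x₁ ∈ D := hfD x₁ hx₁D
    have h1 : |f (f x₁) - f x₁| ≤ d := by
      have := hcontr' (f x₁) hfx₁D x₁ hx₁D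
      rw [hx₁] at this
      rwa [abs_of_nonneg hd0] at this
    have h2 : d ≤ |f (f x₁) - f x₁| := hmin (f x₁) hfx₁D
    have h3 : |f (f x₁) - f x₁| = d := le_antisymm h1 h2
    rcases (abs_eq hd0).mp h3 with h4 | h4
    · -- f (f x₁) - f x₁ = d, so f x₁ ∈ S, so f x₁ ≤ x₁, so d ≤ 0, so d = 0
      have hfS : f x₁ ∈ S := Finset.mem_filter.mpr ⟨hfx₁D, h4⟩
      have hle : f x₁ ≤ x₁ := S.le_max' _ hfS
      have hdle : d ≤ 0 := hx₁ ▸ sub_nonpos.mpr hle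
      have hdz : d = 0 := le_antisymm hdle hd0
      have key : f (f x₁) - x₁ = 0 := by
        rw [← sub_add_sub_cancel (f (f x₁)) (f x₁) x₁, h4, hx₁, hdz, add_zero]
      exact ⟨x₁, hx₁D, sub_eq_zero.mp key⟩
    · have key : f (f x₁) - x₁ = 0 := by
        rw [← sub_add_sub_cancel (f (f x₁)) (f x₁) x₁, h4, hx₁, neg_add_cancel]
      exact ⟨x₁, hx₁D, sub_eq_zero.mp key⟩
  · -- negative case: f x₀ - x₀ = -d
    have hx₀d : f x₀ - x₀ = -d := by
      rw [hd, abs_of_nonpos (sub_nonpos.mpr hcase.le), neg_neg]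
    set S := D.filter (fun x => f x - x = -d) with hS
    have hSne : S.Nonempty := ⟨x₀, Finset.mem_filter.mpr ⟨hx₀D, hx₀d⟩⟩
    set x₁ := S.min' hSne with hx₁def
    have hx₁S : x₁ ∈ S := S.min'_mem hSne
    have hx₁D : x₁ ∈ D := (Finset.mem_filter.mp hx₁S).1
    have hx₁ : f x₁ - x₁ = -d := (Finset.mem_filter.mp hx₁S).2
    have hfx₁D : f x₁ ∈ D := hfD x₁ hx₁D
    have h1 : |f (f x₁) - f x₁| ≤ d := by
      have := hcontr' (f x₁) hfx₁D x₁ hx₁D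
      rw [hx₁] at this
      rwa [abs_neg, abs_of_nonneg hd0] at this
    have h2 : d ≤ |f (f x₁) - f x₁| := hmin (f x₁) hfx₁D
    have h3 : |f (f x₁) - f x₁| = d := le_antisymm h1 h2
    rcases (abs_eq hd0).mp h3 with h4 | h4
    · have key : f (f x₁) - x₁ = 0 := by
        rw [← sub_add_sub_cancel (f (f x₁)) (f x₁) x₁, h4, hx₁, add_neg_cancel]
      exact ⟨x₁, hx₁D, sub_eq_zero.mp key⟩
    · have hfS : f x₁ ∈ S := Finset.mem_filter.mpr ⟨hfx₁D, h4⟩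
      have hle : x₁ ≤ f x₁ := S.min'_le _ hfS
      have hdle : -d ≥ 0 := hx₁ ▸ sub_nonneg.mpr hle
      have hdz : d = 0 := le_antisymm (neg_nonneg.mp hdle) hd0
      have key : f (f x₁) - x₁ = 0 := by
        rw [← sub_add_sub_cancel (f (f x₁)) (f x₁) x₁, h4, hx₁, hdz, neg_zero, add_zero]
      exact ⟨x₁, hx₁D, sub_eq_zero.mp key⟩
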